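/- For every integer k ≥ 1 there exists a real nonassociative algebra with unit whose dimension over ℝ equals 2k + 2 and which is partially alternative but not alternative. -/

import Mathlib

/-- The associator of a nonassociative algebra: `(x, y, z) = (xy)z - x(yz)`. -/
def assocator {A : Type*} [NonAssocRing A] (x y z : A) : A :=
  x * y * z - x * (y * z)

/-- An imaginary unit is an element `q` with `q² = -1`. -/
def IsImgUnit {A : Type*} [NonAssocRing A] (q : A) : Prop := q * q = -1

/-- A real nonassociative unital algebra is partially alternative if it has an imaginary
unit and all associators `(x,x,y)`, `(x,y,x)`, `(y,x,x)` vanish for `x` an imaginary unit. -/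
def IsPartiallyAlternative (A : Type*) [NonAssocRing A] : Prop :=
  (∃ q : A, IsImgUnit q) ∧
    ∀ x : A, IsImgUnit x → ∀ y : A,
      assocator x x y = 0 ∧ assocator x y x = 0 ∧ assocator y x x = 0

/-- Alternative algebra: `(x,x,y) = (y,x,x) = 0` for all `x, y`. -/
def IsAlternative (A : Type*) [NonAssocRing A] : Prop :=
  ∀ x y : A, assocator x x y = 0 ∧ assocator y x x = 0

namespace PAlt

/-- Hermitian form on `Fin k → ℂ`. -/
noncomputable def herm {k : ℕ} (v w : Fin k → ℂ) : ℂ := ∑ j, (starRingEnd ℂ) (v j) * w j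

variable {k : ℕ}

lemma herm_zero_left (w : Fin k → ℂ) : herm 0 w = 0 := by simp [herm]
lemma herm_zero_right (v : Fin k → ℂ) : herm v 0 = 0 := by simp [herm]
lemma herm_add_left (v v' w : Fin k → ℂ) : herm (v + v') w = herm v w + herm v' w := by
  simp [herm, add_mul, Finset.sum_add_distrib]
lemma herm_add_right (v w w' : Fin k → ℂ) : herm v (w + w') = herm v w + herm v w' := by
  simp [herm, mul_add, Finset.sum_add_distrib]
lemma herm_smul_left (c : ℂ) (v w : Fin k → ℂ) :
    herm (c • v) w = (starRingEnd ℂ) c * herm v w := by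
  simp only [herm, Finset.mul_sum, Pi.smul_apply, smul_eq_mul, map_mul]
  exact Finset.sum_congr rfl fun j _ => by ring
lemma herm_smul_right (c : ℂ) (v w : Fin k → ℂ) : herm v (c • w) = c * herm v w := by
  simp only [herm, Finset.mul_sum, Pi.smul_apply, smul_eq_mul]
  exact Finset.sum_congr rfl fun j _ => by ring
lemma herm_real_smul_left (r : ℝ) (v w : Fin k → ℂ) : herm (r • v) w = r • herm v w := by
  simp only [herm, Finset.smul_sum, Pi.smul_apply, Complex.real_smul, map_mul,
    Complex.conj_ofReal]
  exact Finset.sum_congr rfl fun j _ => by ring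
lemma herm_real_smul_right (r : ℝ) (v w : Fin k → ℂ) : herm v (r • w) = r • herm v w := by
  simp only [herm, Finset.smul_sum, Pi.smul_apply, Complex.real_smul]
  exact Finset.sum_congr rfl fun j _ => by ring
lemma herm_self (v : Fin k → ℂ) : herm v v = ((∑ j, Complex.normSq (v j) : ℝ) : ℂ) := by
  simp [herm, Complex.normSq_eq_conj_mul_self]

/-- The algebra `ℂ ⊕ ℂ^k`. -/
def Ak (k : ℕ) : Type := ℂ × (Fin k → ℂ)

noncomputable instance : AddCommGroup (Ak k) :=
  inferInstanceAs (AddCommGroup (ℂ × (Fin k → ℂ)))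
noncomputable instance : Module ℝ (Ak k) := inferInstanceAs (Module ℝ (ℂ × (Fin k → ℂ)))

noncomputable instance : Mul (Ak k) :=
  ⟨fun x y => (x.1 * y.1 + herm x.2 y.2, x.1 • y.2 + y.1 • x.2)⟩
instance : One (Ak k) := ⟨((1 : ℂ), 0)⟩

/-- Constructor. -/
def mk (a : ℂ) (v : Fin k → ℂ) : Ak k := (a, v)

lemma mul_def (x y : Ak k) :
    x * y = (x.1 * y.1 + herm x.2 y.2, x.1 • y.2 + y.1 • x.2) := rfl

@[simp] lemma fst_mul (x y : Ak k) : (x * y).1 = x.1 * y.1 + herm x.2 y.2 := rfl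
@[simp] lemma snd_mul (x y : Ak k) : (x * y).2 = x.1 • y.2 + y.1 • x.2 := rfl

@[simp] lemma fst_add (x y : Ak k) : (x + y).1 = x.1 + y.1 := rfl
@[simp] lemma snd_add (x y : Ak k) : (x + y).2 = x.2 + y.2 := rfl
@[simp] lemma fst_neg (x : Ak k) : (-x).1 = -x.1 := rfl
@[simp] lemma snd_neg (x : Ak k) : (-x).2 = -x.2 := rfl
@[simp] lemma fst_sub (x y : Ak k) : (x - y).1 = x.1 - y.1 := rfl
@[simp] lemma snd_sub (x y : Ak k) : (x - y).2 = x.2 - y.2 := rfl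
@[simp] lemma fst_zero : (0 : Ak k).1 = 0 := rfl
@[simp] lemma snd_zero : (0 : Ak k).2 = 0 := rfl
@[simp] lemma fst_one : (1 : Ak k).1 = 1 := rfl
@[simp] lemma snd_one : (1 : Ak k).2 = 0 := rfl
@[simp] lemma fst_rsmul (r : ℝ) (x : Ak k) : (r • x).1 = r • x.1 := rfl
@[simp] lemma snd_rsmul (r : ℝ) (x : Ak k) : (r • x).2 = r • x.2 := rfl
@[simp] lemma fst_mk (a : ℂ) (v : Fin k → ℂ) : (mk a v).1 = a := rfl
@[simp] lemma snd_mk (a : ℂ) (v : Fin k → ℂ) : (mk a v).2 = v := rfl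

lemma ext_Ak {x y : Ak k} (h1 : x.1 = y.1) (h2 : x.2 = y.2) : x = y := Prod.ext h1 h2

noncomputable instance : NonAssocRing (Ak k) where
  left_distrib x y z := by
    refine (ext_Ak ?_ ?_).symm
    · simp [fst_mul, snd_mul, herm_add_right, mul_add]; ring
    · simp [fst_mul, snd_mul, smul_add, add_smul]; abel
  right_distrib x y z := by
    refine (ext_Ak ?_ ?_).symm
    · simp [fst_mul, snd_mul, herm_add_left, add_mul]; ring
    · simp [fst_mul, snd_mul, smul_add, add_smul]; abel
  zero_mul x := by
    refine ext_Ak ?_ ?_ <;> simp [fst_mul, snd_mul, herm_zero_left]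
  mul_zero x := by
    refine ext_Ak ?_ ?_ <;> simp [fst_mul, snd_mul, herm_zero_right]
  one_mul x := by
    refine ext_Ak ?_ ?_ <;> simp [fst_mul, snd_mul, herm_zero_left]
  mul_one x := by
    refine ext_Ak ?_ ?_ <;> simp [fst_mul, snd_mul, herm_zero_right]

instance : SMulCommClass ℝ (Ak k) (Ak k) where
  smul_comm r x y := by
    have : r • (x * y) = x * (r • y) := by
      refine ext_Ak ?_ ?_
      · simp [fst_mul, snd_mul, herm_real_smul_right, smul_add, mul_smul_comm]; ring
      · simp only [fst_mul, snd_mul, fst_rsmul, snd_rsmul, smul_add, smul_comm r x.1 y.2, smul_assoc]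
    exact this

instance : IsScalarTower ℝ (Ak k) (Ak k) where
  smul_assoc r x y := by
    have : (r • x) * y = r • (x * y) := by
      refine ext_Ak ?_ ?_
      · simp [fst_mul, snd_mul, herm_real_smul_left, smul_add, smul_mul_assoc]; ring
      · simp only [fst_mul, snd_mul, fst_rsmul, snd_rsmul, smul_add, smul_assoc,
          smul_comm r y.1 x.2]
    exact this

end PAlt

namespace Main

open PAlt Complex

variable {k : ℕ}

lemma neg_one_def : (-1 : Ak k) = ((-1 : ℂ), 0) := by
  refine ext_Ak ?_ ?_ <;> simp

/-- Imaginary units have zero vector part. -/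
lemma imgUnit_structure {x : Ak k} (h : x * x = -1) : x.2 = 0 := by
  have h1 := congrArg Prod.fst h
  have h2 := congrArg Prod.snd h
  rw [mul_def, neg_one_def] at h1 h2
  simp only at h1 h2
  by_cases hx : x.1 = 0
  · exfalso
    rw [hx, zero_mul, zero_add, herm_self] at h1
    have := congrArg Complex.re h1
    simp only [Complex.ofReal_re] at this
    have hnn : (0:ℝ) ≤ ∑ j, Complex.normSq (x.2 j) :=
      Finset.sum_nonneg fun j _ => Complex.normSq_nonneg _
    rw [this] at hnn
    norm_num at hnn
  · have : (x.1 + x.1) • x.2 = 0 := by rw [add_smul]; exact h2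
    rcases smul_eq_zero.mp this with h' | h'
    · exact absurd h' (by simpa [two_mul] using mul_ne_zero (two_ne_zero' ℂ) hx)
    · exact h'

lemma assoc_left {x : Ak k} (hx : x.2 = 0) (y : Ak k) : assocator x x y = 0 := by
  refine ext_Ak ?_ ?_ <;>
    simp [assocator, fst_mul, snd_mul, hx, herm_zero_left, herm_zero_right, smul_smul] <;> ring_nf

lemma assoc_mid {x : Ak k} (hx : x.2 = 0) (y : Ak k) : assocator x y x = 0 := by
  refine ext_Ak ?_ ?_ <;>
    simp [assocator, fst_mul, snd_mul, hx, herm_zero_left, herm_zero_right, smul_smul] <;> ring_nf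

lemma assoc_right {x : Ak k} (hx : x.2 = 0) (y : Ak k) : assocator y x x = 0 := by
  refine ext_Ak ?_ ?_ <;>
    simp [assocator, fst_mul, snd_mul, hx, herm_zero_left, herm_zero_right, smul_smul] <;> ring_nf

lemma herm_single_left (i0 : Fin k) (w : Fin k → ℂ) :
    herm (Pi.single i0 1) w = w i0 := by
  simp [herm, Pi.single_apply, apply_ite, Finset.sum_ite_eq']

theorem main (k : ℕ) (hk : 1 ≤ k) :
    ∃ (A : Type) (_ : NonAssocRing A) (_ : Module ℝ A) (_ : SMulCommClass ℝ A A)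
      (_ : IsScalarTower ℝ A A),
      Module.finrank ℝ A = 2 * k + 2 ∧ IsPartiallyAlternative A ∧ ¬ IsAlternative A := by
  refine ⟨Ak k, inferInstance, inferInstance, inferInstance, inferInstance, ?_, ?_, ?_⟩
  · have key : Module.finrank ℝ (ℂ × (Fin k → ℂ)) = 2 * k + 2 := by
      rw [Module.finrank_prod, Module.finrank_pi_fintype, Complex.finrank_real_complex]
      simp [Finset.sum_const, Complex.finrank_real_complex]; ring
    exact key
  · constructor
    · refine ⟨PAlt.mk Complex.I 0, ?_⟩
      show PAlt.mk Complex.I 0 * PAlt.mk Complex.I 0 = -1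
      rw [neg_one_def]
      refine ext_Ak ?_ ?_ <;> simp [fst_mul, snd_mul, herm_zero_left, fst_mk, snd_mk, Complex.I_mul_I]
    · intro x hx y
      have h2 := imgUnit_structure hx
      exact ⟨assoc_left h2 y, assoc_mid h2 y, assoc_right h2 y⟩
  · intro hAlt
    set i0 : Fin k := ⟨0, hk⟩
    set e : Fin k → ℂ := Pi.single i0 1 with he
    have hee : herm e e = 1 := by rw [he, herm_single_left]; simp
    obtain ⟨h1, -⟩ := hAlt (PAlt.mk Complex.I e) (PAlt.mk 0 e)
    have := congrArg Prod.fst h1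
    simp only [assocator, fst_mul, snd_mul, fst_mk, snd_mk, fst_sub, snd_sub, fst_zero,
      herm_add_left, herm_add_right, herm_smul_left, herm_smul_right, hee,
      Complex.I_mul_I] at this
    norm_num [Complex.ext_iff] at this

end Main

/-- For every `k ≥ 1` there is a real nonassociative unital algebra of dimension `2k + 2`
that is partially alternative but not alternative. -/
theorem exists_partiallyAlternative_not_alternative (k : ℕ) (hk : 1 ≤ k) :
    ∃ (A : Type) (_ : NonAssocRing A) (_ : Module ℝ A) (_ : SMulCommClass ℝ A A)
      (_ : IsScalarTower ℝ A A),
      Module.finrank ℝ A = 2 * k + 2 ∧ IsPartiallyAlternative A ∧ ¬ IsAlternative A := by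
  exact Main.main k hk
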